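/- Let G be a finite simple group. Then G is a B-group if and only if G is not abelian. -/
import Mathlib

open scoped Classical Pointwise

noncomputable instance (G : Type*) [Group G] [Finite G] : Fintype (Subgroup G) :=
  Fintype.ofFinite _

/-- The Möbius function of the subgroup lattice of a finite group `G`, defined as the
matrix inverse of the zeta matrix whose `(K, D)` entry is `1` if `K ≤ D` and `0` otherwise. -/
noncomputable def subgroupMu (G : Type*) [Group G] [Finite G] :
    Matrix (Subgroup G) (Subgroup G) ℚ :=
  (Matrix.of fun K D : Subgroup G => if K ≤ D then (1 : ℚ) else 0)⁻¹

section Aux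

variable (G : Type*) [Group G] [Finite G]

noncomputable instance : LocallyFiniteOrder (Subgroup G) :=
  Fintype.toLocallyFiniteOrder

open IncidenceAlgebra Finset

lemma zetaMatrix_mul_muMatrix :
    (Matrix.of fun K D : Subgroup G => if K ≤ D then (1 : ℚ) else 0) *
      (Matrix.of fun K D : Subgroup G => mu ℚ K D) = 1 := by
  ext K D
  rw [Matrix.mul_apply]
  have h1 : ∀ X : Subgroup G,
      (Matrix.of fun K D : Subgroup G => if K ≤ D then (1 : ℚ) else 0) K X *
        (Matrix.of fun K D : Subgroup G => mu ℚ K D) X D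
      = zeta ℚ K X * mu ℚ X D := by
    intro X
    by_cases h : K ≤ X <;> simp [zeta_apply, h]
  simp_rw [h1]
  have h2 : ∑ X : Subgroup G, zeta ℚ K X * mu ℚ X D
      = ∑ X ∈ Icc K D, zeta ℚ K X * mu ℚ X D := by
    refine (Finset.sum_subset (Finset.subset_univ _) ?_).symm
    intro X _ hX
    rw [Finset.mem_Icc, not_and_or] at hX
    rcases hX with h | h
    · simp [zeta_apply, h]
    · rw [apply_eq_zero_of_not_le h, mul_zero]
  rw [h2]
  have h3 := congrFun (congrFun (congrArg DFunLike.coe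
    (zeta_mul_mu (𝕜 := ℚ) (α := Subgroup G))) K) D
  rw [mul_apply] at h3
  rw [h3, one_apply, Matrix.one_apply]

lemma subgroupMu_eq : subgroupMu G = Matrix.of fun K D : Subgroup G => mu ℚ K D :=
  Matrix.inv_eq_right_inv (zetaMatrix_mul_muMatrix G)

lemma sum_zeta_mu (K : Subgroup G) :
    ∑ X : Subgroup G, (if K ≤ X then (1 : ℚ) else 0) * subgroupMu G X ⊤
      = if K = ⊤ then 1 else 0 := by
  have := congrFun (congrFun (zetaMatrix_mul_muMatrix G) K) ⊤
  rw [Matrix.mul_apply] at this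
  rw [subgroupMu_eq]
  simpa [Matrix.one_apply] using this

end Aux

/-- `m_{G,N} = (1/|G|) · Σ_{X ≤ G, XN = G} |X| · μ(X, G)`. -/
noncomputable def mGN (G : Type*) [Group G] [Finite G] (N : Subgroup G) : ℚ :=
  (1 / (Nat.card G : ℚ)) *
    ∑ X : Subgroup G,
      if (X : Set G) * (N : Set G) = (Set.univ : Set G)
      then (Nat.card X : ℚ) * subgroupMu G X ⊤ else 0

/-- A finite group `G` is a `B`-group if `m_{G,N} = 0` for every nontrivial normal
subgroup `N` of `G`. -/
def IsBGroup (G : Type*) [Group G] [Finite G] : Prop :=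
  ∀ N : Subgroup G, N.Normal → N ≠ ⊥ → mGN G N = 0

section Main

variable (G : Type*) [Group G] [Finite G]

open Finset in
lemma mGN_top_eq [Fintype G] :
    mGN G ⊤ = (1 / (Nat.card G : ℚ)) *
      ((Finset.univ.filter fun g : G => Subgroup.zpowers g = ⊤).card : ℚ) := by
  unfold mGN
  congr 1
  have hcond : ∀ X : Subgroup G,
      (X : Set G) * ((⊤ : Subgroup G) : Set G) = (Set.univ : Set G) := by
    intro X
    ext x
    simp only [Set.mem_univ, iff_true]
    exact Set.mem_mul.2 ⟨1, X.one_mem, x, by simp, one_mul x⟩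
  have hcard : ∀ X : Subgroup G, (Nat.card X : ℚ)
      = ∑ g : G, if g ∈ X then (1 : ℚ) else 0 := by
    intro X
    rw [Finset.sum_boole, Nat.card_eq_fintype_card, Fintype.card_subtype]
  calc ∑ X : Subgroup G,
        (if (X : Set G) * ((⊤ : Subgroup G) : Set G) = (Set.univ : Set G)
          then (Nat.card X : ℚ) * subgroupMu G X ⊤ else 0)
      = ∑ X : Subgroup G, (∑ g : G, if g ∈ X then (1 : ℚ) else 0) * subgroupMu G X ⊤ := by
        refine Finset.sum_congr rfl fun X _ => ?_
        rw [if_pos (hcond X), hcard X]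
    _ = ∑ g : G, ∑ X : Subgroup G, (if Subgroup.zpowers g ≤ X then (1 : ℚ) else 0)
          * subgroupMu G X ⊤ := by
        simp_rw [Finset.sum_mul, Subgroup.zpowers_le]
        exact Finset.sum_comm
    _ = ∑ g : G, if Subgroup.zpowers g = ⊤ then (1 : ℚ) else 0 := by
        refine Finset.sum_congr rfl fun g _ => ?_
        exact sum_zeta_mu G (Subgroup.zpowers g)
    _ = _ := by rw [Finset.sum_boole]

end Main

/-- A finite simple group is a `B`-group iff it is not abelian. -/
theorem isBGroup_iff_not_abelian (G : Type*) [Group G] [Finite G]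
    (hG : IsSimpleGroup G) :
    IsBGroup G ↔ ¬ (∀ a b : G, a * b = b * a) := by
  letI : Fintype G := Fintype.ofFinite G
  constructor
  · intro hB hab
    obtain ⟨g, hg⟩ := exists_ne (1 : G)
    have hnorm : (Subgroup.zpowers g).Normal :=
      ⟨fun n hn k => by simpa [hab k n, mul_assoc] using hn⟩
    have hgtop : Subgroup.zpowers g = ⊤ := by
      rcases hG.eq_bot_or_eq_top_of_normal _ hnorm with h | h
      · exact absurd (h ▸ Subgroup.mem_zpowers g) (by simpa using hg)
      · exact h
    have h0 := hB ⊤ inferInstance (by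
      intro h
      exact hg (Subgroup.mem_bot.1 (h ▸ Subgroup.mem_top g)))
    rw [mGN_top_eq] at h0
    have hGpos : (0 : ℚ) < (Nat.card G : ℚ) := by
      exact_mod_cast Nat.card_pos
    have hfpos : (0 : ℚ) <
        ((Finset.univ.filter fun x : G => Subgroup.zpowers x = ⊤).card : ℚ) := by
      have : g ∈ Finset.univ.filter fun x : G => Subgroup.zpowers x = ⊤ := by
        simp [hgtop]
      exact_mod_cast Finset.card_pos.2 ⟨g, this⟩
    have := mul_pos (div_pos one_pos hGpos) hfpos
    rw [h0] at this
    exact lt_irrefl 0 this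
  · intro hna N hN hNbot
    have hNtop : N = ⊤ := (hG.eq_bot_or_eq_top_of_normal N hN).resolve_left hNbot
    subst hNtop
    rw [mGN_top_eq]
    have : (Finset.univ.filter fun g : G => Subgroup.zpowers g = ⊤) = ∅ := by
      refine Finset.filter_eq_empty_iff.2 fun g _ h => ?_
      refine hna fun a b => ?_
      obtain ⟨m, hm⟩ := Subgroup.mem_zpowers_iff.1
        (show a ∈ Subgroup.zpowers g from h.symm ▸ Subgroup.mem_top a)
      obtain ⟨n, hn⟩ := Subgroup.mem_zpowers_iff.1
        (show b ∈ Subgroup.zpowers g from h.symm ▸ Subgroup.mem_top b)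
      rw [← hm, ← hn, ← zpow_add, ← zpow_add, add_comm]
    rw [this]
    simp
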